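/- Let a ∈ ℝ and let u : ℝ → ℤ → ℝ be differentiable in t and satisfy u̇ₙ = uₙ(uₙ₊₁uₙ − a)(uₙuₙ₋₁ − a)(uₙ₊₂uₙ₊₁ − uₙ₋₁uₙ₋₂). Define v t n = u t (n+1) · u t n − a. Then v satisfies v̇ₙ = (vₙ² + a vₙ)(vₙ₊₂vₙ₊₁ − vₙ₋₁vₙ₋₂). -/

import Mathlib

/-- Transformation T3 (v̂ₙ = uₙ₊₁uₙ − a) maps equation (E11) to equation (3.12). -/
theorem stmt_6 (a : ℝ) (u v : ℝ → ℤ → ℝ)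
    (hu : ∀ t n, HasDerivAt (fun s => u s n)
      (u t n * (u t (n + 1) * u t n - a) * (u t n * u t (n - 1) - a) *
        (u t (n + 2) * u t (n + 1) - u t (n - 1) * u t (n - 2))) t)
    (hv : ∀ t n, v t n = u t (n + 1) * u t n - a) :
    ∀ t n, HasDerivAt (fun s => v s n)
      (((v t n) ^ 2 + a * v t n) * (v t (n + 2) * v t (n + 1) - v t (n - 1) * v t (n - 2))) t := by
  intro t n
  have h : HasDerivAt (fun s => u s (n + 1) * u s n - a) _ t :=
    ((hu t (n + 1)).mul (hu t n)).sub_const a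
  have e : (fun s => u s (n + 1) * u s n - a) = fun s => v s n := by
    funext s; rw [hv]
  rw [e] at h
  convert h using 1
  simp only [hv,
    show n + 1 + 1 = n + 2 by ring, show n + 1 - 1 = n by ring,
    show n + 1 + 2 = n + 3 by ring, show n + 1 - 2 = n - 1 by ring,
    show n + 2 + 1 = n + 3 by ring, show n - 1 + 1 = n by ring,
    show n - 2 + 1 = n - 1 by ring]
  ring
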